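/- Let X be a Banach space with the separable complementation property, let Y be an arbitrary Banach space, and let C be the closed unit ball of the space of weakly sequentially continuous continuous n-homogeneous polynomials from X to Y. Then C is closed in the topology of pointwise (norm) convergence on the space of continuous n-homogeneous polynomials from X to Y if and only if C is sequentially closed in that topology, i.e. if and only if every continuous n-homogeneous polynomial that is the pointwise limit of a sequence from C belongs to C. -/

import Mathlib

open Filter Topology

/-- A sequence `x` in a normed space converges weakly to `x₀`. -/
def WeakSeqConv (𝕜 : Type*) [RCLike 𝕜] {Z : Type*} [NormedAddCommGroup Z] [NormedSpace 𝕜 Z]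
    (x : ℕ → Z) (x₀ : Z) : Prop :=
  ∀ φ : Z →L[𝕜] 𝕜, Filter.Tendsto (fun k => φ (x k)) Filter.atTop (nhds (φ x₀))

/-- The separable complementation property. -/
def SepComplProp (𝕜 : Type*) [RCLike 𝕜] (Z : Type*) [NormedAddCommGroup Z]
    [NormedSpace 𝕜 Z] : Prop :=
  ∀ S : Submodule 𝕜 Z, IsClosed (S : Set Z) → TopologicalSpace.IsSeparable (S : Set Z) →
    ∃ W : Submodule 𝕜 Z, IsClosed (W : Set Z) ∧ TopologicalSpace.IsSeparable (W : Set Z) ∧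
      S ≤ W ∧ ∃ π : Z →L[𝕜] Z, (∀ x, π x ∈ W) ∧ (∀ w ∈ W, π w = w)

variable {𝕜 : Type*} [RCLike 𝕜] {n : ℕ} {X : Type*}
  [NormedAddCommGroup X] [NormedSpace 𝕜 X]
  {Y : Type*} [NormedAddCommGroup Y] [NormedSpace 𝕜 Y]

/-- A continuous `n`-linear map on `Xⁿ` is symmetric; a continuous `n`-homogeneous polynomial
is (identified with) a symmetric continuous `n`-linear map `T`, via `P x = T (x, …, x)`. -/
def IsSymmML (T : ContinuousMultilinearMap 𝕜 (fun _ : Fin n => X) Y) : Prop :=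
  ∀ (σ : Equiv.Perm (Fin n)) (x : Fin n → X), T (x ∘ σ) = T x

/-- The norm of the `n`-homogeneous polynomial associated to `T`. -/
noncomputable def polyNorm (T : ContinuousMultilinearMap 𝕜 (fun _ : Fin n => X) Y) : ℝ :=
  sSup ((fun x => ‖T (fun _ => x)‖) '' Metric.closedBall (0 : X) 1)

/-- The polynomial associated to `T` is weakly sequentially continuous. -/
def PolyWeaklySeqContinuous (T : ContinuousMultilinearMap 𝕜 (fun _ : Fin n => X) Y) : Prop :=
  ∀ (x : ℕ → X) (x₀ : X), WeakSeqConv 𝕜 x x₀ →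
    Filter.Tendsto (fun k => T (fun _ => x k)) Filter.atTop (nhds (T (fun _ => x₀)))

lemma polyNorm_bddAbove (T : ContinuousMultilinearMap 𝕜 (fun _ : Fin n => X) Y) :
    BddAbove ((fun x => ‖T (fun _ => x)‖) '' Metric.closedBall (0 : X) 1) := by
  refine ⟨‖T‖, ?_⟩
  rintro - ⟨x, hx, rfl⟩
  simp only [Metric.mem_closedBall, dist_zero_right] at hx
  calc ‖T (fun _ => x)‖ ≤ ‖T‖ * ∏ _i : Fin n, ‖x‖ := T.le_opNorm _
    _ ≤ ‖T‖ * 1 := by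
        refine mul_le_mul_of_nonneg_left ?_ (norm_nonneg T)
        rw [Finset.prod_const]
        exact pow_le_one₀ (norm_nonneg x) hx
    _ = ‖T‖ := mul_one _

lemma norm_apply_le_polyNorm (T : ContinuousMultilinearMap 𝕜 (fun _ : Fin n => X) Y)
    {x : X} (hx : ‖x‖ ≤ 1) : ‖T (fun _ => x)‖ ≤ polyNorm T :=
  le_csSup (polyNorm_bddAbove T) ⟨x, by simpa [Metric.mem_closedBall, dist_zero_right] using hx, rfl⟩

lemma polyNorm_nonneg (T : ContinuousMultilinearMap 𝕜 (fun _ : Fin n => X) Y) :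
    0 ≤ polyNorm T :=
  le_trans (norm_nonneg _) (norm_apply_le_polyNorm T (x := 0) (by simp))

lemma polyNorm_le (T : ContinuousMultilinearMap 𝕜 (fun _ : Fin n => X) Y) {a : ℝ}
    (ha : 0 ≤ a) (h : ∀ x : X, ‖x‖ ≤ 1 → ‖T (fun _ => x)‖ ≤ a) : polyNorm T ≤ a := by
  refine Real.sSup_le ?_ ha
  rintro - ⟨x, hx, rfl⟩
  exact h x (by simpa [Metric.mem_closedBall, dist_zero_right] using hx)

lemma norm_apply_le_polyNorm_mul (T : ContinuousMultilinearMap 𝕜 (fun _ : Fin n => X) Y)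
    (z : X) : ‖T (fun _ => z)‖ ≤ polyNorm T * ‖z‖ ^ n := by
  rcases Nat.eq_zero_or_pos n with hn | hn
  · subst hn
    have h0 : (fun _ : Fin 0 => z) = (fun _ : Fin 0 => (0:X)) := funext fun i => i.elim0
    rw [pow_zero, mul_one, h0]
    exact norm_apply_le_polyNorm T (by simp)
  · rcases eq_or_ne z 0 with rfl | hz
    · have : T (fun _ => (0:X)) = 0 := T.map_coord_zero ⟨0, hn⟩ rfl
      simp [this, zero_pow hn.ne', norm_nonneg]
    · set r : ℝ := ‖z‖ with hr
      have hrpos : 0 < r := norm_pos_iff.mpr hz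
      have hu : ‖((r : 𝕜))⁻¹ • z‖ = 1 := by
        rw [norm_smul, norm_inv, RCLike.norm_ofReal, abs_of_pos hrpos, inv_mul_cancel₀ hrpos.ne']
      have key : T (fun _ => z) = ((r:𝕜))^n • T (fun _ => ((r:𝕜))⁻¹ • z) := by
        have : (fun _ : Fin n => z) = fun _ : Fin n => (r:𝕜) • (((r:𝕜))⁻¹ • z) := by
          funext i
          rw [smul_inv_smul₀]
          exact_mod_cast (RCLike.ofReal_ne_zero).mpr hrpos.ne'
        rw [this]
        rw [show (fun _ : Fin n => (r:𝕜) • (((r:𝕜))⁻¹ • z)) = fun i : Fin n => (fun _ : Fin n => (r:𝕜)) i • (fun _ : Fin n => ((r:𝕜))⁻¹ • z) i from rfl]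
        rw [T.map_smul_univ]
        simp [Finset.prod_const]
      rw [key, norm_smul, norm_pow, RCLike.norm_ofReal, abs_of_pos hrpos]
      calc r ^ n * ‖T fun _ => ((r:𝕜))⁻¹ • z‖ ≤ r ^n * polyNorm T := by
            exact mul_le_mul_of_nonneg_left (norm_apply_le_polyNorm T hu.le) (by positivity)
        _ = polyNorm T * ‖z‖ ^ n := by rw [mul_comm, hr]

noncomputable def epsK (𝕜 : Type*) [RCLike 𝕜] (b : Bool) : 𝕜 := if b then 1 else -1

lemma epsK_norm (b : Bool) : ‖epsK 𝕜 b‖ = 1 := by cases b <;> simp [epsK]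

lemma combinatorial_c (f : Fin n → Fin n) :
    (∑ s : Fin n → Bool, ∏ i, epsK 𝕜 (s i) * epsK 𝕜 (s (f i)))
      = if Function.Bijective f then ((2:𝕜)^n) else 0 := by
  classical
  set m : Fin n → ℕ := fun j => (Finset.univ.filter (fun k => f k = j)).card with hm
  have step1 : ∀ s : Fin n → Bool,
      (∏ i, epsK 𝕜 (s i) * epsK 𝕜 (s (f i))) = ∏ j, epsK 𝕜 (s j) ^ (m j + 1) := by
    intro s
    rw [Finset.prod_mul_distrib]
    have h2 : (∏ i, epsK 𝕜 (s (f i))) = ∏ j, epsK 𝕜 (s j) ^ (m j) := by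
      rw [← Finset.prod_fiberwise_of_maps_to (g := f) (t := Finset.univ)
        (fun x _ => Finset.mem_univ (f x)) (fun k => epsK 𝕜 (s (f k)))]
      refine Finset.prod_congr rfl fun j _ => ?_
      rw [show (∏ k ∈ Finset.univ.filter (fun k => f k = j), epsK 𝕜 (s (f k)))
          = ∏ k ∈ Finset.univ.filter (fun k => f k = j), epsK 𝕜 (s j) from
        Finset.prod_congr rfl fun k hk => by rw [(Finset.mem_filter.mp hk).2]]
      rw [Finset.prod_const, hm]
    rw [h2, ← Finset.prod_mul_distrib]
    refine Finset.prod_congr rfl fun j _ => ?_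
    rw [pow_succ']
  calc (∑ s : Fin n → Bool, ∏ i, epsK 𝕜 (s i) * epsK 𝕜 (s (f i)))
      = ∑ s : Fin n → Bool, ∏ j, epsK 𝕜 (s j) ^ (m j + 1) := by
        exact Finset.sum_congr rfl fun s _ => step1 s
    _ = ∏ j, ∑ b : Bool, epsK 𝕜 b ^ (m j + 1) := by
        rw [Finset.prod_univ_sum]
        rw [Fintype.piFinset_univ]
    _ = ∏ j, (if Odd (m j) then (2:𝕜) else 0) := by
        refine Finset.prod_congr rfl fun j _ => ?_
        rcases Nat.even_or_odd (m j) with he | ho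
        · have : ¬ Odd (m j) := by simpa [Nat.not_odd_iff_even] using he
          rw [if_neg this]
          have : Odd (m j + 1) := he.add_one
          simp [epsK, this.neg_one_pow]
        · rw [if_pos ho]
          have : Even (m j + 1) := ho.add_one
          simp [epsK, this.neg_one_pow]
    _ = if Function.Bijective f then ((2:𝕜)^n) else 0 := by
        by_cases hf : Function.Bijective f
        · rw [if_pos hf]
          have hone : ∀ j, m j = 1 := by
            intro j
            have : Finset.univ.filter (fun k => f k = j) = {(Equiv.ofBijective f hf).symm j} := by
              ext k
              simp only [Finset.mem_filter, Finset.mem_univ, true_and, Finset.mem_singleton]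
              constructor
              · intro h; exact (Equiv.ofBijective f hf).injective (by
                  simpa [Equiv.ofBijective_apply, Equiv.apply_symm_apply] using h)
              · rintro rfl
                exact (Equiv.ofBijective f hf).apply_symm_apply j
            rw [hm]; simp [this]
          have : ∀ j ∈ Finset.univ, (if Odd (m j) then (2:𝕜) else 0) = 2 := by
            intro j _; rw [hone j]; norm_num
          rw [Finset.prod_congr rfl this, Finset.prod_const]
          simp
        · rw [if_neg hf]
          have hsurj : ¬ Function.Surjective f := by
            intro hs
            exact hf (Finite.surjective_iff_bijective.mp hs)
          simp only [Function.Surjective, not_forall] at hsurj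
          obtain ⟨j, hj⟩ := hsurj
          have hmj : m j = 0 := by
            rw [hm]
            simp only [Finset.card_eq_zero]
            ext k
            simp only [Finset.mem_filter, Finset.mem_univ, true_and, Finset.notMem_empty,
              iff_false]
            exact fun h => hj ⟨k, h⟩
          refine Finset.prod_eq_zero (Finset.mem_univ j) ?_
          rw [hmj]
          norm_num

lemma polarization (T : ContinuousMultilinearMap 𝕜 (fun _ : Fin n => X) Y)
    (hT : IsSymmML T) (x : Fin n → X) :
    ∑ s : Fin n → Bool, (∏ i, epsK 𝕜 (s i)) • T (fun _ => ∑ i, epsK 𝕜 (s i) • x i)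
      = ((2^n * n.factorial : ℕ) : 𝕜) • T x := by
  classical
  have expand : ∀ s : Fin n → Bool,
      T (fun _ : Fin n => ∑ i, epsK 𝕜 (s i) • x i)
        = ∑ f : Fin n → Fin n, (∏ k, epsK 𝕜 (s (f k))) • T (x ∘ f) := by
    intro s
    rw [show (fun _ : Fin n => ∑ i, epsK 𝕜 (s i) • x i)
        = (fun k : Fin n => ∑ i : Fin n, (fun (_ : Fin n) (j : Fin n) => epsK 𝕜 (s j) • x j) k i)
        from rfl]
    rw [T.map_sum]
    refine Finset.sum_congr rfl fun f _ => ?_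
    exact T.map_smul_univ (fun k => epsK 𝕜 (s (f k))) (fun k => x (f k))
  calc (∑ s : Fin n → Bool, (∏ i, epsK 𝕜 (s i)) • T (fun _ => ∑ i, epsK 𝕜 (s i) • x i))
      = ∑ s : Fin n → Bool, ∑ f : Fin n → Fin n,
          ((∏ i, epsK 𝕜 (s i) * epsK 𝕜 (s (f i)))) • T (x ∘ f) := by
        refine Finset.sum_congr rfl fun s _ => ?_
        rw [expand s, Finset.smul_sum]
        refine Finset.sum_congr rfl fun f _ => ?_
        rw [smul_smul, Finset.prod_mul_distrib]
    _ = ∑ f : Fin n → Fin n,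
          (∑ s : Fin n → Bool, ∏ i, epsK 𝕜 (s i) * epsK 𝕜 (s (f i))) • T (x ∘ f) := by
        rw [Finset.sum_comm]
        refine Finset.sum_congr rfl fun f _ => ?_
        rw [Finset.sum_smul]
    _ = ∑ f : Fin n → Fin n,
          (if Function.Bijective f then ((2:𝕜)^n) else 0) • T (x ∘ f) := by
        refine Finset.sum_congr rfl fun f _ => ?_
        rw [combinatorial_c]
    _ = ∑ f ∈ Finset.univ.filter (fun f : Fin n → Fin n => Function.Bijective f),
          ((2:𝕜)^n) • T x := by
        rw [Finset.sum_filter]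
        refine Finset.sum_congr rfl fun f _ => ?_
        by_cases hf : Function.Bijective f
        · rw [if_pos hf, if_pos hf]
          congr 1
          have : x ∘ f = x ∘ (Equiv.ofBijective f hf) := rfl
          rw [this, hT (Equiv.ofBijective f hf) x]
        · rw [if_neg hf, if_neg hf, zero_smul]
    _ = ((2^n * n.factorial : ℕ) : 𝕜) • T x := by
        rw [Finset.sum_const]
        have hcard : (Finset.univ.filter (fun f : Fin n → Fin n => Function.Bijective f)).card
            = n.factorial := by
          have : (Finset.univ.filter (fun f : Fin n → Fin n => Function.Bijective f)).card
              = Fintype.card {f : Fin n → Fin n // Function.Bijective f} := by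
            rw [Fintype.card_subtype]
          rw [this]
          have e : Equiv.Perm (Fin n) ≃ {f : Fin n → Fin n // Function.Bijective f} :=
            { toFun := fun σ => ⟨σ, σ.bijective⟩
              invFun := fun p => Equiv.ofBijective p.1 p.2
              left_inv := fun σ => Equiv.ext fun y => rfl
              right_inv := fun p => Subtype.ext rfl }
          rw [← Fintype.card_congr e, Fintype.card_perm, Fintype.card_fin]
        rw [hcard, ← Nat.cast_smul_eq_nsmul 𝕜, smul_smul]
        congr 1
        push_cast
        ring

lemma norm_le_unit (T : ContinuousMultilinearMap 𝕜 (fun _ : Fin n => X) Y)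
    (hT : IsSymmML T) (x : Fin n → X) (hx : ∀ i, ‖x i‖ ≤ 1) :
    ‖T x‖ ≤ (n:ℝ)^n * polyNorm T := by
  classical
  have hpol := polarization T hT x
  have hz : ∀ s : Fin n → Bool, ‖∑ i, epsK 𝕜 (s i) • x i‖ ≤ (n:ℝ) := by
    intro s
    calc ‖∑ i, epsK 𝕜 (s i) • x i‖ ≤ ∑ i, ‖epsK 𝕜 (s i) • x i‖ := norm_sum_le _ _
      _ ≤ ∑ _i : Fin n, (1:ℝ) := by
          refine Finset.sum_le_sum fun i _ => ?_
          rw [norm_smul, epsK_norm, one_mul]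
          exact hx i
      _ = (n:ℝ) := by simp
  have hterm : ∀ s : Fin n → Bool,
      ‖(∏ i, epsK 𝕜 (s i)) • T (fun _ => ∑ i, epsK 𝕜 (s i) • x i)‖
        ≤ polyNorm T * (n:ℝ)^n := by
    intro s
    rw [norm_smul]
    have h1 : ‖∏ i, epsK 𝕜 (s i)‖ = 1 := by
      rw [norm_prod]
      simp [epsK_norm]
    rw [h1, one_mul]
    calc ‖T (fun _ => ∑ i, epsK 𝕜 (s i) • x i)‖
        ≤ polyNorm T * ‖∑ i, epsK 𝕜 (s i) • x i‖ ^ n := norm_apply_le_polyNorm_mul T _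
      _ ≤ polyNorm T * (n:ℝ)^n := by
          refine mul_le_mul_of_nonneg_left ?_ (polyNorm_nonneg T)
          exact pow_le_pow_left₀ (norm_nonneg _) (hz s) n
  have hsum : ‖∑ s : Fin n → Bool, (∏ i, epsK 𝕜 (s i)) • T (fun _ => ∑ i, epsK 𝕜 (s i) • x i)‖
      ≤ (2:ℝ)^n * (polyNorm T * (n:ℝ)^n) := by
    calc ‖∑ s : Fin n → Bool, (∏ i, epsK 𝕜 (s i)) • T (fun _ => ∑ i, epsK 𝕜 (s i) • x i)‖
        ≤ ∑ s : Fin n → Bool, ‖(∏ i, epsK 𝕜 (s i)) • T (fun _ => ∑ i, epsK 𝕜 (s i) • x i)‖ :=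
          norm_sum_le _ _
      _ ≤ ∑ _s : Fin n → Bool, polyNorm T * (n:ℝ)^n :=
          Finset.sum_le_sum fun s _ => hterm s
      _ = (2:ℝ)^n * (polyNorm T * (n:ℝ)^n) := by
          rw [Finset.sum_const, Finset.card_univ]
          rw [Fintype.card_fun]
          simp [nsmul_eq_mul]
  have hlhs : ‖((2^n * n.factorial : ℕ) : 𝕜) • T x‖
      = ((2^n * n.factorial : ℕ) : ℝ) * ‖T x‖ := by
    rw [norm_smul, RCLike.norm_natCast]
  rw [hpol] at hsum
  rw [hlhs] at hsum
  have key : ((2:ℝ)^n) * ‖T x‖ ≤ ((2:ℝ)^n) * ((n:ℝ)^n * polyNorm T) := by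
    have h1 : ((2:ℝ)^n) * ‖T x‖ ≤ ((2^n * n.factorial : ℕ) : ℝ) * ‖T x‖ := by
      refine mul_le_mul_of_nonneg_right ?_ (norm_nonneg _)
      push_cast
      nlinarith [Nat.one_le_iff_ne_zero.mpr (Nat.factorial_ne_zero n), pow_pos (by norm_num : (0:ℝ) < 2) n,
        (by exact_mod_cast Nat.one_le_iff_ne_zero.mpr (Nat.factorial_ne_zero n) : (1:ℝ) ≤ (n.factorial : ℝ))]
    calc ((2:ℝ)^n) * ‖T x‖ ≤ ((2^n * n.factorial : ℕ) : ℝ) * ‖T x‖ := h1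
      _ ≤ (2:ℝ)^n * (polyNorm T * (n:ℝ)^n) := hsum
      _ = ((2:ℝ)^n) * ((n:ℝ)^n * polyNorm T) := by ring
  have h2pos : (0:ℝ) < (2:ℝ)^n := by positivity
  exact (mul_le_mul_iff_right₀ h2pos).mp key

lemma opNorm_le_symm (T : ContinuousMultilinearMap 𝕜 (fun _ : Fin n => X) Y)
    (hT : IsSymmML T) : ‖T‖ ≤ (n:ℝ)^n * polyNorm T := by
  refine ContinuousMultilinearMap.opNorm_le_bound (f := T) (mul_nonneg (by positivity) (polyNorm_nonneg T)) fun m => ?_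
  by_cases h0 : ∃ i, m i = 0
  · obtain ⟨i, hi⟩ := h0
    rw [T.map_coord_zero i hi]
    have : (0:ℝ) ≤ ((n:ℝ)^n * polyNorm T) * ∏ i, ‖m i‖ := by
      have := polyNorm_nonneg T
      positivity
    simpa using this
  · push_neg at h0
    set u : Fin n → X := fun i => ((‖m i‖ : 𝕜))⁻¹ • m i with hu
    have hui : ∀ i, ‖u i‖ = 1 := by
      intro i
      have hpos : 0 < ‖m i‖ := norm_pos_iff.mpr (h0 i)
      rw [hu]
      simp only [norm_smul, norm_inv, RCLike.norm_ofReal, abs_of_pos hpos]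
      rw [inv_mul_cancel₀ hpos.ne']
    have hmu : m = fun i => ((‖m i‖ : 𝕜)) • u i := by
      funext i
      rw [hu]
      rw [smul_inv_smul₀]
      exact_mod_cast RCLike.ofReal_ne_zero.mpr (norm_pos_iff.mpr (h0 i)).ne'
    calc ‖T m‖ = ‖(∏ i, ((‖m i‖:𝕜))) • T u‖ := by
          conv_lhs => rw [hmu]
          rw [T.map_smul_univ]
      _ = (∏ i, ‖m i‖) * ‖T u‖ := by
          rw [norm_smul, norm_prod]
          congr 1
          refine Finset.prod_congr rfl fun i _ => ?_
          rw [RCLike.norm_ofReal, abs_of_nonneg (norm_nonneg _)]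
      _ ≤ (∏ i, ‖m i‖) * ((n:ℝ)^n * polyNorm T) := by
          refine mul_le_mul_of_nonneg_left ?_ (Finset.prod_nonneg fun i _ => norm_nonneg _)
          exact norm_le_unit T hT u fun i => (hui i).le
      _ = ((n:ℝ)^n * polyNorm T) * ∏ i, ‖m i‖ := by ring

lemma poly_lipschitz (Q : ContinuousMultilinearMap 𝕜 (fun _ : Fin n => X) Y)
    (hs : IsSymmML Q) (hQ : polyNorm Q ≤ 1) {R : ℝ} (hR : 0 ≤ R) (a b : X)
    (ha : ‖a‖ ≤ R) (hb : ‖b‖ ≤ R) :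
    ‖Q (fun _ => a) - Q (fun _ => b)‖ ≤ (n:ℝ) * (n:ℝ)^n * R^(n-1) * ‖a - b‖ := by
  classical
  rcases Nat.eq_zero_or_pos n with hn | hn
  · subst hn
    have : (fun _ : Fin 0 => a) = (fun _ : Fin 0 => b) := funext fun i => i.elim0
    rw [this, sub_self, norm_zero]
    positivity
  have hop : ‖Q‖ ≤ (n:ℝ)^n := by
    calc ‖Q‖ ≤ (n:ℝ)^n * polyNorm Q := opNorm_le_symm Q hs
      _ ≤ (n:ℝ)^n * 1 := mul_le_mul_of_nonneg_left hQ (by positivity)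
      _ = (n:ℝ)^n := mul_one _
  set u : ℕ → Fin n → X := fun i k => if (k:ℕ) < i then b else a with hudef
  have hu0 : u 0 = fun _ => a := by funext k; simp [hudef]
  have hun : u n = fun _ => b := by funext k; simp [hudef, k.isLt]
  have hstep : ∀ i : Fin n, Q (u i) - Q (u (i+1)) =
      Q (Function.update (u ((i:ℕ)+1)) i (a - b)) := by
    intro i
    have h1 : u (i:ℕ) = Function.update (u ((i:ℕ)+1)) i a := by
      funext k
      rcases eq_or_ne k i with rfl | hk
      · simp [hudef, Function.update_self]
      · rw [Function.update_of_ne hk]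
        simp only [hudef]
        have : ((k:ℕ) < (i:ℕ)) ↔ ((k:ℕ) < (i:ℕ)+1) := by
          constructor
          · omega
          · intro h
            rcases Nat.lt_succ_iff_lt_or_eq.mp h with h' | h'
            · exact h'
            · exact absurd (Fin.ext h') hk
        by_cases hlt : (k:ℕ) < (i:ℕ)
        · rw [if_pos hlt, if_pos (this.mp hlt)]
        · rw [if_neg hlt, if_neg (fun hc => hlt (this.mpr hc))]
    have h2 : u ((i:ℕ)+1) = Function.update (u ((i:ℕ)+1)) i b := by
      funext k
      rcases eq_or_ne k i with rfl | hk
      · simp [hudef, Function.update_self]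
      · rw [Function.update_of_ne hk]
    rw [ContinuousMultilinearMap.map_update_sub, ← h1, ← h2]
  have htele : Q (fun _ => a) - Q (fun _ => b) = ∑ i : Fin n, (Q (u i) - Q (u (i+1))) := by
    have h' : ∑ i ∈ Finset.range n, (Q (u (i+1)) - Q (u i)) = Q (u n) - Q (u 0) :=
      Finset.sum_range_sub (fun i => Q (u i)) n
    calc Q (fun _ => a) - Q (fun _ => b) = - (Q (u n) - Q (u 0)) := by rw [hu0, hun, neg_sub]
      _ = - ∑ i ∈ Finset.range n, (Q (u (i+1)) - Q (u i)) := by rw [h']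
      _ = ∑ i ∈ Finset.range n, (Q (u i) - Q (u (i+1))) := by
          rw [← Finset.sum_neg_distrib]
          exact Finset.sum_congr rfl fun i _ => (neg_sub _ _)
      _ = ∑ i : Fin n, (Q (u (i:ℕ)) - Q (u ((i:ℕ)+1))) :=
          (Fin.sum_univ_eq_sum_range (fun i => Q (u i) - Q (u (i+1))) n).symm
  have hbound : ∀ i : Fin n, ‖Q (Function.update (u ((i:ℕ)+1)) i (a - b))‖
      ≤ (n:ℝ)^n * R^(n-1) * ‖a - b‖ := by
    intro i
    calc ‖Q (Function.update (u ((i:ℕ)+1)) i (a - b))‖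
        ≤ ‖Q‖ * ∏ k, ‖Function.update (u ((i:ℕ)+1)) i (a - b) k‖ := Q.le_opNorm _
      _ ≤ (n:ℝ)^n * (R^(n-1) * ‖a - b‖) := by
          refine mul_le_mul hop ?_ (Finset.prod_nonneg fun k _ => norm_nonneg _) (by positivity)
          rw [← Finset.prod_erase_mul _ _ (Finset.mem_univ i)]
          have h1 : ∏ k ∈ Finset.univ.erase i, ‖Function.update (u ((i:ℕ)+1)) i (a - b) k‖
              ≤ R^(n-1) := by
            calc ∏ k ∈ Finset.univ.erase i, ‖Function.update (u ((i:ℕ)+1)) i (a - b) k‖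
                ≤ ∏ _k ∈ Finset.univ.erase i, R := by
                  refine Finset.prod_le_prod (fun k _ => norm_nonneg _) fun k hk => ?_
                  rw [Function.update_of_ne (Finset.mem_erase.mp hk).1]
                  simp only [hudef]
                  split <;> assumption
              _ = R^(n-1) := by
                  rw [Finset.prod_const, Finset.card_erase_of_mem (Finset.mem_univ i),
                    Finset.card_univ, Fintype.card_fin]
          have h2 : ‖Function.update (u ((i:ℕ)+1)) i (a - b) i‖ = ‖a - b‖ := by
            rw [Function.update_self]
          rw [h2]
          exact mul_le_mul_of_nonneg_right h1 (norm_nonneg _)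
      _ = (n:ℝ)^n * R^(n-1) * ‖a - b‖ := by ring
  calc ‖Q (fun _ => a) - Q (fun _ => b)‖ = ‖∑ i : Fin n, (Q (u i) - Q (u (i+1)))‖ := by
        rw [htele]
    _ ≤ ∑ i : Fin n, ‖Q (u i) - Q (u (i+1))‖ := norm_sum_le _ _
    _ ≤ ∑ _i : Fin n, (n:ℝ)^n * R^(n-1) * ‖a - b‖ := by
        refine Finset.sum_le_sum fun i _ => ?_
        rw [hstep i]
        exact hbound i
    _ = (n:ℝ) * (n:ℝ)^n * R^(n-1) * ‖a - b‖ := by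
        rw [Finset.sum_const, Finset.card_univ, Fintype.card_fin, nsmul_eq_mul]
        ring

-- topology helper lemmas (generic, instance-free α)
lemma aux_isClosed {α : Type*} (t : TopologicalSpace α) (S : Set α)
    (h : ∀ T, T ∈ @closure α t S → T ∈ S) : @IsClosed α t S := by
  letI := t
  exact isClosed_of_closure_subset h

lemma aux_mem_of_seq {α X' Y' : Type*} [TopologicalSpace Y'] (f : α → X' → Y') (S : Set α)
    (h : @IsClosed α (TopologicalSpace.induced f Pi.topologicalSpace) S)
    (B : ℕ → α) (hB : ∀ k, B k ∈ S) (T : α)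
    (hconv : ∀ x, Filter.Tendsto (fun k => f (B k) x) Filter.atTop (nhds (f T x))) : T ∈ S := by
  letI := TopologicalSpace.induced f Pi.topologicalSpace
  have htend : Filter.Tendsto B Filter.atTop (nhds T) := by
    rw [nhds_induced, Filter.tendsto_comap_iff, tendsto_pi_nhds]
    exact hconv
  exact h.mem_of_tendsto htend (Filter.Eventually.of_forall hB)

lemma aux_approx {α X' Y' : Type*} [NormedAddCommGroup Y'] (f : α → X' → Y') (S : Set α) (T : α)
    (hT : T ∈ @closure α (TopologicalSpace.induced f Pi.topologicalSpace) S)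
    (F : Finset X') {ε : ℝ} (hε : 0 < ε) :
    ∃ Q ∈ S, ∀ x ∈ F, ‖f Q x - f T x‖ < ε := by
  letI := TopologicalSpace.induced f Pi.topologicalSpace
  set O : Set α := f ⁻¹' ((F : Set X').pi (fun x => Metric.ball (f T x) ε)) with hO
  have hopen : IsOpen O :=
    isOpen_induced (isOpen_set_pi F.finite_toSet fun x _ => Metric.isOpen_ball)
  have hTmem : T ∈ O := by
    simp only [hO, Set.mem_preimage, Set.mem_pi]
    intro x _
    exact Metric.mem_ball_self hε
  obtain ⟨Q, hQO, hQS⟩ := mem_closure_iff.mp hT O hopen hTmem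
  refine ⟨Q, hQS, fun x hx => ?_⟩
  have hball := (Set.mem_pi.mp (Set.mem_preimage.mp hQO)) x hx
  rwa [Metric.mem_ball, dist_eq_norm] at hball

lemma symm_comp (T : ContinuousMultilinearMap 𝕜 (fun _ : Fin n => X) Y) (hT : IsSymmML T)
    (π : X →L[𝕜] X) : IsSymmML (T.compContinuousLinearMap (fun _ => π)) :=
  fun σ x => hT σ fun i => π (x i)

lemma symm_smul (T : ContinuousMultilinearMap 𝕜 (fun _ : Fin n => X) Y) (c : 𝕜)
    (hT : IsSymmML T) : IsSymmML (c • T) := by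
  intro σ x
  simp only [ContinuousMultilinearMap.smul_apply, hT σ x]

theorem stmt8 [CompleteSpace X] [CompleteSpace Y]
    (hSCP : SepComplProp 𝕜 X) :
    @IsClosed _ (TopologicalSpace.induced
        (fun T : {T : ContinuousMultilinearMap 𝕜 (fun _ : Fin n => X) Y // IsSymmML T} =>
          (fun x => T.1 (fun _ => x) : X → Y))
        Pi.topologicalSpace)
      {T : {T : ContinuousMultilinearMap 𝕜 (fun _ : Fin n => X) Y // IsSymmML T} |
        PolyWeaklySeqContinuous T.1 ∧ polyNorm T.1 ≤ 1} ↔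
    (∀ T : {T : ContinuousMultilinearMap 𝕜 (fun _ : Fin n => X) Y // IsSymmML T},
      (∃ B : ℕ → {T : ContinuousMultilinearMap 𝕜 (fun _ : Fin n => X) Y // IsSymmML T},
        (∀ k, PolyWeaklySeqContinuous (B k).1 ∧ polyNorm (B k).1 ≤ 1) ∧
        ∀ x : X, Filter.Tendsto (fun k => (B k).1 (fun _ => x)) Filter.atTop
          (nhds (T.1 (fun _ => x)))) →
      PolyWeaklySeqContinuous T.1 ∧ polyNorm T.1 ≤ 1) := by
  classical
  constructor
  · -- closed implies sequentially closed
    intro hcl T hB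
    obtain ⟨B, hBmem, hBconv⟩ := hB
    exact aux_mem_of_seq _ _ hcl B hBmem T hBconv
  · -- sequentially closed implies closed
    intro hseq
    refine aux_isClosed _ _ fun T hT => ?_
    -- Step 1 : the norm bound
    have hnorm : polyNorm T.1 ≤ 1 := by
      refine polyNorm_le _ zero_le_one fun z hz => ?_
      by_contra hgt
      push_neg at hgt
      obtain ⟨Q, hQS, hQ⟩ := aux_approx _ _ T hT {z}
        (show (0:ℝ) < ‖T.1 (fun _ => z)‖ - 1 by linarith)
      have h1 : ‖Q.1 (fun _ => z) - T.1 (fun _ => z)‖ < ‖T.1 (fun _ => z)‖ - 1 :=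
        hQ z (Finset.mem_singleton_self z)
      have h2 : ‖Q.1 (fun _ => z)‖ ≤ 1 := le_trans (norm_apply_le_polyNorm Q.1 hz) hQS.2
      have h3 : ‖T.1 (fun _ => z)‖
          ≤ ‖Q.1 (fun _ => z)‖ + ‖Q.1 (fun _ => z) - T.1 (fun _ => z)‖ := by
        have heq : T.1 (fun _ => z)
            = Q.1 (fun _ => z) - (Q.1 (fun _ => z) - T.1 (fun _ => z)) := by abel
        calc ‖T.1 (fun _ => z)‖
            = ‖Q.1 (fun _ => z) - (Q.1 (fun _ => z) - T.1 (fun _ => z))‖ := by rw [← heq]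
          _ ≤ ‖Q.1 (fun _ => z)‖ + ‖Q.1 (fun _ => z) - T.1 (fun _ => z)‖ := norm_sub_le _ _
      linarith
    refine ⟨?_, hnorm⟩
    -- Step 2 : weak sequential continuity
    intro x x₀ hweak
    set s : Set X := Set.range x ∪ {x₀} with hs
    have hs_count : s.Countable := (Set.countable_range x).union (Set.countable_singleton x₀)
    set S₀ : Submodule 𝕜 X := (Submodule.span 𝕜 s).topologicalClosure with hS₀
    have hS₀closed : IsClosed (S₀ : Set X) := Submodule.isClosed_topologicalClosure _
    have hS₀sep : TopologicalSpace.IsSeparable (S₀ : Set X) := by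
      rw [hS₀, Submodule.topologicalClosure_coe]
      exact hs_count.isSeparable.span.closure
    obtain ⟨W, hWc, hWsep, hS₀W, π, hπin, hπid⟩ := hSCP S₀ hS₀closed hS₀sep
    have hxW : ∀ k, x k ∈ W := fun k =>
      hS₀W (Submodule.le_topologicalClosure _
        (Submodule.subset_span (Or.inl (Set.mem_range_self k))))
    have hx₀W : x₀ ∈ W :=
      hS₀W (Submodule.le_topologicalClosure _ (Submodule.subset_span (Or.inr rfl)))
    obtain ⟨c, hc_count, hc_sub⟩ := hWsep
    obtain ⟨d, hd⟩ : ∃ d : ℕ → X, insert (0:X) c = Set.range d :=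
      (hc_count.insert 0).exists_eq_range ⟨0, Set.mem_insert _ _⟩
    have hwclos : ∀ w ∈ W, w ∈ closure (Set.range d) := fun w hw => by
      rw [← hd]
      exact closure_mono (Set.subset_insert _ _) (hc_sub hw)
    -- diagonal selection of approximating polynomials on the countable dense set
    have hsel : ∀ k : ℕ, ∃ Q, Q ∈ {T : {T : ContinuousMultilinearMap 𝕜 (fun _ : Fin n => X) Y //
        IsSymmML T} | PolyWeaklySeqContinuous T.1 ∧ polyNorm T.1 ≤ 1} ∧
        ∀ j ≤ k, ‖Q.1 (fun _ => d j) - T.1 (fun _ => d j)‖ < 1/(k+1) := by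
      intro k
      obtain ⟨Q, hQS, hQ⟩ := aux_approx _ _ T hT ((Finset.range (k+1)).image d)
        (show (0:ℝ) < 1/(k+1) by positivity)
      exact ⟨Q, hQS, fun j hj =>
        hQ (d j) (Finset.mem_image_of_mem d (Finset.mem_range.mpr (Nat.lt_succ_of_le hj)))⟩
    choose Q hQS hQ using hsel
    -- convergence of Q k towards T on all of W
    have hWconv : ∀ w ∈ W,
        Filter.Tendsto (fun k => (Q k).1 (fun _ => w)) Filter.atTop
          (nhds (T.1 (fun _ => w))) := by
      intro w hw
      rw [Metric.tendsto_atTop]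
      intro ε hε
      set R : ℝ := ‖w‖ + 1 with hR
      have hR0 : 0 ≤ R := by positivity
      set L : ℝ := (n:ℝ) * (n:ℝ)^n * R^(n-1) with hL
      have hL0 : 0 ≤ L := by positivity
      have hTc : ContinuousAt (fun z : X => T.1 (fun _ => z)) w :=
        (T.1.cont.comp (continuous_pi fun _ => continuous_id)).continuousAt
      obtain ⟨δ₁, hδ₁pos, hδ₁⟩ := Metric.continuousAt_iff.mp hTc (ε/3) (by linarith)
      set δ : ℝ := min δ₁ (min 1 (ε/(3*(L+1)))) with hδ
      have hδpos : 0 < δ := lt_min hδ₁pos (lt_min one_pos (by positivity))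
      obtain ⟨y, hy_mem, hy_dist⟩ := Metric.mem_closure_iff.mp (hwclos w hw) δ hδpos
      obtain ⟨j, rfl⟩ : ∃ j, d j = y := hy_mem
      obtain ⟨M, hM⟩ := exists_nat_one_div_lt (show (0:ℝ) < ε/3 by linarith)
      refine ⟨max j M, fun k hk => ?_⟩
      have hjk : j ≤ k := le_trans (le_max_left _ _) hk
      have hMk : M ≤ k := le_trans (le_max_right _ _) hk
      have hδ1 : δ ≤ 1 := le_trans (min_le_right _ _) (min_le_left _ _)
      have hδδ₁ : δ ≤ δ₁ := min_le_left _ _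
      have hδε : δ ≤ ε/(3*(L+1)) := le_trans (min_le_right _ _) (min_le_right _ _)
      have hwd : ‖w - d j‖ < δ := by
        rw [← dist_eq_norm]
        exact hy_dist
      have hdj_norm : ‖d j‖ ≤ R := by
        have h1 : ‖d j‖ ≤ ‖w‖ + ‖w - d j‖ := by
          calc ‖d j‖ = ‖w - (w - d j)‖ := by congr 1; abel
            _ ≤ ‖w‖ + ‖w - d j‖ := norm_sub_le _ _
        linarith
      have hw_norm : ‖w‖ ≤ R := by rw [hR]; linarith
      have hterm1 : ‖(Q k).1 (fun _ => w) - (Q k).1 (fun _ => d j)‖ < ε/3 := by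
        have hlip := poly_lipschitz (Q k).1 (Q k).2 (hQS k).2 hR0 w (d j) hw_norm hdj_norm
        have h2 : L * ‖w - d j‖ < ε/3 := by
          have h3 : L * ‖w - d j‖ ≤ L * δ := mul_le_mul_of_nonneg_left hwd.le hL0
          have h4 : L * δ ≤ L * (ε/(3*(L+1))) := mul_le_mul_of_nonneg_left hδε hL0
          have h5 : L * (ε/(3*(L+1))) < ε/3 := by
            rw [mul_div_assoc', div_lt_div_iff₀ (by positivity) (by norm_num : (0:ℝ) < 3)]
            nlinarith
          linarith
        calc ‖(Q k).1 (fun _ => w) - (Q k).1 (fun _ => d j)‖ ≤ L * ‖w - d j‖ := hlip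
          _ < ε/3 := h2
      have hterm2 : ‖(Q k).1 (fun _ => d j) - T.1 (fun _ => d j)‖ < ε/3 := by
        have h1 := hQ k j hjk
        have h2 : (1:ℝ)/(k+1) ≤ 1/(M+1) := by
          apply div_le_div_of_nonneg_left one_pos.le (by positivity)
          exact_mod_cast Nat.succ_le_succ hMk
        linarith
      have hterm3 : ‖T.1 (fun _ => d j) - T.1 (fun _ => w)‖ < ε/3 := by
        have hd_dist : dist (d j) w < δ₁ := by
          rw [dist_comm]
          exact lt_of_lt_of_le hy_dist hδδ₁
        have := hδ₁ hd_dist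
        rwa [dist_eq_norm] at this
      calc dist ((Q k).1 fun _ => w) (T.1 fun _ => w)
          ≤ dist ((Q k).1 fun _ => w) ((Q k).1 fun _ => d j)
            + dist ((Q k).1 fun _ => d j) (T.1 fun _ => d j)
            + dist (T.1 fun _ => d j) (T.1 fun _ => w) := dist_triangle4 _ _ _ _
        _ < ε/3 + ε/3 + ε/3 := by
            rw [dist_eq_norm, dist_eq_norm, dist_eq_norm]
            exact add_lt_add (add_lt_add hterm1 hterm2) hterm3
        _ = ε := by ring
    -- scaled composition with the projection π
    set c₀ : ℝ := ‖π‖ + 1 with hc₀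
    have hc₀pos : 0 < c₀ := by positivity
    have hc₀n : 0 < c₀ ^ n := pow_pos hc₀pos n
    set γ : 𝕜 := (((c₀ ^ n)⁻¹ : ℝ) : 𝕜) with hγ
    have hγnorm : ‖γ‖ = (c₀^n)⁻¹ := by
      rw [hγ, RCLike.norm_ofReal]
      exact abs_of_pos (inv_pos.mpr hc₀n)
    have hγne : γ ≠ 0 := by
      rw [hγ]
      exact_mod_cast RCLike.ofReal_ne_zero.mpr (inv_pos.mpr hc₀n).ne'
    set Tπ : ContinuousMultilinearMap 𝕜 (fun _ : Fin n => X) Y :=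
      γ • (T.1.compContinuousLinearMap (fun _ => π)) with hTπ
    set Bπ : ℕ → ContinuousMultilinearMap 𝕜 (fun _ : Fin n => X) Y :=
      fun k => γ • ((Q k).1.compContinuousLinearMap (fun _ => π)) with hBπ
    have hTπsymm : IsSymmML Tπ := symm_smul _ _ (symm_comp _ T.2 π)
    have hBsymm : ∀ k, IsSymmML (Bπ k) := fun k => symm_smul _ _ (symm_comp _ (Q k).2 π)
    have hBwsc : ∀ k, PolyWeaklySeqContinuous (Bπ k) := by
      intro k y y₀ hy
      have hyπ : WeakSeqConv 𝕜 (fun j => π (y j)) (π y₀) := fun φ => hy (φ.comp π)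
      have h1 := ((hQS k).1 (fun j => π (y j)) (π y₀) hyπ).const_smul γ
      simpa only [hBπ, ContinuousMultilinearMap.smul_apply,
        ContinuousMultilinearMap.compContinuousLinearMap_apply] using h1
    have hBnorm : ∀ k, polyNorm (Bπ k) ≤ 1 := by
      intro k
      refine polyNorm_le _ zero_le_one fun z hz => ?_
      have h1 : ‖(Bπ k) (fun _ => z)‖ = ‖γ‖ * ‖(Q k).1 (fun _ => π z)‖ := by
        simp only [hBπ, ContinuousMultilinearMap.smul_apply,
          ContinuousMultilinearMap.compContinuousLinearMap_apply, norm_smul]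
      rw [h1, hγnorm]
      have h3 : ‖π z‖ ≤ c₀ := by
        calc ‖π z‖ ≤ ‖π‖ * ‖z‖ := π.le_opNorm z
          _ ≤ ‖π‖ * 1 := mul_le_mul_of_nonneg_left hz (norm_nonneg π)
          _ ≤ c₀ := by rw [hc₀]; linarith [mul_one ‖π‖]
      have h4 : ‖π z‖^n ≤ c₀^n := pow_le_pow_left₀ (norm_nonneg _) h3 n
      calc (c₀^n)⁻¹ * ‖(Q k).1 (fun _ => π z)‖
          ≤ (c₀^n)⁻¹ * (1 * c₀^n) := by
            refine mul_le_mul_of_nonneg_left ?_ (by positivity)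
            calc ‖(Q k).1 (fun _ => π z)‖
                ≤ polyNorm (Q k).1 * ‖π z‖^n := norm_apply_le_polyNorm_mul _ _
              _ ≤ 1 * c₀^n := mul_le_mul (hQS k).2 h4 (by positivity) zero_le_one
        _ = 1 := by field_simp
    have hBconv : ∀ z : X,
        Filter.Tendsto (fun k => (Bπ k) (fun _ => z)) Filter.atTop (nhds (Tπ (fun _ => z))) := by
      intro z
      have h1 := (hWconv (π z) (hπin z)).const_smul γ
      simpa only [hBπ, hTπ, ContinuousMultilinearMap.smul_apply,
        ContinuousMultilinearMap.compContinuousLinearMap_apply] using h1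
    have hfinal := hseq ⟨Tπ, hTπsymm⟩
      ⟨fun k => ⟨Bπ k, hBsymm k⟩, fun k => ⟨hBwsc k, hBnorm k⟩, hBconv⟩
    have h1 := hfinal.1 x x₀ hweak
    have heq : ∀ z ∈ W, Tπ (fun _ : Fin n => z) = γ • T.1 (fun _ => z) := by
      intro z hz
      simp only [hTπ, ContinuousMultilinearMap.smul_apply,
        ContinuousMultilinearMap.compContinuousLinearMap_apply]
      rw [show (fun _ : Fin n => π z) = (fun _ : Fin n => z) from funext fun _ => hπid z hz]
    rw [show (fun k => Tπ (fun _ : Fin n => x k)) = (fun k => γ • T.1 (fun _ => x k)) from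
      funext fun k => heq _ (hxW k), heq _ hx₀W] at h1
    have h2 := h1.const_smul γ⁻¹
    simpa only [inv_smul_smul₀ hγne] using h2
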